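/- Let four circles in the Euclidean plane have centers c₁, c₂, c₃, c₄ and radii r₁, r₂, r₃, r₄ > 0, and suppose they are pairwise externally tangent, i.e. dist(c_i, c_j) = r_i + r_j for all i ≠ j. Then the curvatures κ_i = 1/r_i satisfy 2(κ₁² + κ₂² + κ₃² + κ₄²) = (κ₁ + κ₂ + κ₃ + κ₄)². -/

import Mathlib

/-- The (expanded) Cayley–Menger determinant of four points with pairwise
squared distances `a = d₁₂², b = d₁₃², c = d₁₄², d = d₂₃², e = d₂₄², f = d₃₄²`. -/
def descartesCM (a b c d e f : ℝ) : ℝ :=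
  - 2*d*e*f + 2*c*d*f + 2*c*d*e - 2*c*d^2 - 2*c^2*d + 2*b*e*f - 2*b*e^2 + 2*b*d*e
  - 2*b*c*f + 2*b*c*e + 2*b*c*d - 2*b^2*e - 2*a*f^2 + 2*a*e*f + 2*a*d*f + 2*a*c*f
  - 2*a*c*e + 2*a*c*d + 2*a*b*f + 2*a*b*e - 2*a*b*d - 2*a^2*f

/-- Four points in the plane have vanishing Cayley–Menger determinant. -/
lemma descartesCM_coords (x1 y1 x2 y2 x3 y3 x4 y4 : ℝ) :
    descartesCM ((x1-x2)^2+(y1-y2)^2) ((x1-x3)^2+(y1-y3)^2) ((x1-x4)^2+(y1-y4)^2)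
      ((x2-x3)^2+(y2-y3)^2) ((x2-x4)^2+(y2-y4)^2) ((x3-x4)^2+(y3-y4)^2) = 0 := by
  unfold descartesCM; ring

/-- The Cayley–Menger determinant of the tangency distances factors. -/
lemma descartesCM_radii (r1 r2 r3 r4 : ℝ) :
    descartesCM ((r1+r2)^2) ((r1+r3)^2) ((r1+r4)^2) ((r2+r3)^2) ((r2+r4)^2) ((r3+r4)^2)
      = 32 * ((r2*r3*r4 + r1*r3*r4 + r1*r2*r4 + r1*r2*r3)^2
          - 2 * ((r2*r3*r4)^2 + (r1*r3*r4)^2 + (r1*r2*r4)^2 + (r1*r2*r3)^2)) := by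
  unfold descartesCM; ring

/-- Descartes circle theorem: four pairwise externally tangent circles in the
plane, with centers c_i and radii r_i, have curvatures κ_i = 1/r_i satisfying
2(κ₁² + κ₂² + κ₃² + κ₄²) = (κ₁ + κ₂ + κ₃ + κ₄)². -/
theorem descartes_circle_theorem
    (c : Fin 4 → EuclideanSpace ℝ (Fin 2)) (r : Fin 4 → ℝ)
    (hr : ∀ i, 0 < r i)
    (htangent : ∀ i j, i ≠ j → dist (c i) (c j) = r i + r j) :
    2 * ((1 / r 0) ^ 2 + (1 / r 1) ^ 2 + (1 / r 2) ^ 2 + (1 / r 3) ^ 2) =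
      (1 / r 0 + 1 / r 1 + 1 / r 2 + 1 / r 3) ^ 2 := by
  have hd : ∀ i j : Fin 4, i ≠ j →
      (c i 0 - c j 0)^2 + (c i 1 - c j 1)^2 = (r i + r j)^2 := by
    intro i j hij
    have h := htangent i j hij
    have h2 : dist (c i) (c j) ^ 2 = ∑ k : Fin 2, dist (c i k) (c j k) ^ 2 := by
      rw [EuclideanSpace.dist_eq]
      exact Real.sq_sqrt (Finset.sum_nonneg fun k _ => sq_nonneg _)
    rw [h] at h2
    simpa [Fin.sum_univ_two, Real.dist_eq, sq_abs] using h2.symm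
  have h01 := hd 0 1 (by decide)
  have h02 := hd 0 2 (by decide)
  have h03 := hd 0 3 (by decide)
  have h12 := hd 1 2 (by decide)
  have h13 := hd 1 3 (by decide)
  have h23 := hd 2 3 (by decide)
  have hcm := descartesCM_coords (c 0 0) (c 0 1) (c 1 0) (c 1 1)
    (c 2 0) (c 2 1) (c 3 0) (c 3 1)
  rw [h01, h02, h03, h12, h13, h23, descartesCM_radii] at hcm
  have hE : (r 1*r 2*r 3 + r 0*r 2*r 3 + r 0*r 1*r 3 + r 0*r 1*r 2)^2
      - 2 * ((r 1*r 2*r 3)^2 + (r 0*r 2*r 3)^2 + (r 0*r 1*r 3)^2 + (r 0*r 1*r 2)^2) = 0 := by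
    linarith
  have h0 := (hr 0).ne'
  have h1 := (hr 1).ne'
  have h2 := (hr 2).ne'
  have h3 := (hr 3).ne'
  field_simp
  linear_combination (-1 : ℝ) * hE
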